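/- In the standing setup with G, u_X, φ and φ̄ as defined, the family γ = (γ^{(a)}) is a unitary 2-modification φ̄ ⊗ φ ⇛ ψ: sup_a ‖γ^{(a)}‖ < ∞ and for every 1-cell X ∈ C₁(a,b), (id_{F(X)} ⊠ γ^{(a)}) ∘ (φ̄_X ⊠ id_{x_a}) ∘ (id_{x̄_b} ⊠ φ_X) = ψ_X ∘ (γ^{(b)} ⊠ id_{F(X)}). Since γ also intertwines the multiplications and units, (ψ, m, i) and φ̄ ⊗ φ (with multiplication id_{φ̄} ⊗ ε ⊗ id_φ and unit η) are isomorphic as Q-systems in End_{Fun(C,D)}(F). -/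

import Mathlib

/-!
Self-contained background for formalizing results from
"Q-system completion of C*-2-categories of 2-functors".

We model a strict C*-2-category as a (Mathlib) bicategory which is `Bicategory.Strict`,
together with a `CStarStruct`: a star operation and a norm on 2-cells, compatible with
the vertical composition and the horizontal whiskerings.
-/

open CategoryTheory

infixr:81 " ◁ " => CategoryTheory.Bicategory.whiskerLeft
infixl:81 " ▷ " => CategoryTheory.Bicategory.whiskerRight
notation "α_" => CategoryTheory.Bicategory.associator
notation "λ_" => CategoryTheory.Bicategory.leftUnitor
notation "ρ_" => CategoryTheory.Bicategory.rightUnitor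

universe w₁ v₁ u₁ w₂ v₂ u₂

/-- A C*-structure on a bicategory: each hom-category is a C*-category.  We record the
star operation and the norm on 2-cells together with their compatibilities. -/
class CStarStruct (B : Type u₁) [Bicategory.{w₁, v₁} B] where
  star : ∀ {a b : B} {f g : a ⟶ b}, (f ⟶ g) → (g ⟶ f)
  nrm : ∀ {a b : B} {f g : a ⟶ b}, (f ⟶ g) → ℝ
  star_star : ∀ {a b : B} {f g : a ⟶ b} (η : f ⟶ g), star (star η) = η
  star_id : ∀ {a b : B} (f : a ⟶ b), star (𝟙 f) = 𝟙 f
  star_comp : ∀ {a b : B} {f g h : a ⟶ b} (η : f ⟶ g) (θ : g ⟶ h),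
    star (η ≫ θ) = star θ ≫ star η
  star_whiskerLeft : ∀ {a b c : B} (f : a ⟶ b) {g h : b ⟶ c} (η : g ⟶ h),
    star (f ◁ η) = f ◁ star η
  star_whiskerRight : ∀ {a b c : B} {f g : a ⟶ b} (η : f ⟶ g) (h : b ⟶ c),
    star (η ▷ h) = star η ▷ h
  nrm_nonneg : ∀ {a b : B} {f g : a ⟶ b} (η : f ⟶ g), 0 ≤ nrm η
  nrm_star : ∀ {a b : B} {f g : a ⟶ b} (η : f ⟶ g), nrm (star η) = nrm η
  nrm_comp_le : ∀ {a b : B} {f g h : a ⟶ b} (η : f ⟶ g) (θ : g ⟶ h),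
    nrm (η ≫ θ) ≤ nrm η * nrm θ
  nrm_cstar : ∀ {a b : B} {f g : a ⟶ b} (η : f ⟶ g),
    nrm (η ≫ star η) = nrm η * nrm η

section Basics

variable {B : Type u₁} [Bicategory.{w₁, v₁} B] [CStarStruct B]

/-- The star (adjoint) of a 2-cell. -/
abbrev star2 {a b : B} {f g : a ⟶ b} (η : f ⟶ g) : g ⟶ f := CStarStruct.star η

/-- The norm of a 2-cell. -/
abbrev norm2 {a b : B} {f g : a ⟶ b} (η : f ⟶ g) : ℝ := CStarStruct.nrm η

/-- A 2-cell `u : f ⟶ g` is unitary if `u u* = id` and `u* u = id`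
(composites written diagrammatically). -/
def IsUnitary {a b : B} {f g : a ⟶ b} (u : f ⟶ g) : Prop :=
  u ≫ star2 u = 𝟙 f ∧ star2 u ≫ u = 𝟙 g

/-- A projection 2-cell: `p² = p = p*`. -/
def IsProjection {a b : B} {f : a ⟶ b} (p : f ⟶ f) : Prop :=
  p ≫ p = p ∧ star2 p = p

end Basics

/-- A C*-2-category is locally orthogonal projection complete if every projection
2-cell `p` on a 1-cell `f` splits as `p = v v*` with `v` an isometry (`v* v = id`). -/
def LocProjComplete (B : Type u₁) [Bicategory.{w₁, v₁} B] [CStarStruct B] : Prop :=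
  ∀ {a b : B} (f : a ⟶ b) (p : f ⟶ f), IsProjection p →
    ∃ (g : a ⟶ b) (v : g ⟶ f), v ≫ star2 v = 𝟙 g ∧ star2 v ≫ v = p

section QSystems

variable {B : Type u₁} [Bicategory.{w₁, v₁} B] [CStarStruct B]

/-- The Q-system axioms for a 1-cell `Q : b ⟶ b` with multiplication `m` and unit `i`:
associativity, (left and right) unitality, the Frobenius condition (both versions)
and separability. -/
def IsQSystem {b : B} (Q : b ⟶ b) (m : Q ≫ Q ⟶ Q) (i : 𝟙 b ⟶ Q) : Prop :=
  ((m ▷ Q) ≫ m = (α_ Q Q Q).hom ≫ (Q ◁ m) ≫ m) ∧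
  ((i ▷ Q) ≫ m = (λ_ Q).hom) ∧
  ((Q ◁ i) ≫ m = (ρ_ Q).hom) ∧
  (m ≫ star2 m = (star2 m ▷ Q) ≫ (α_ Q Q Q).hom ≫ (Q ◁ m)) ∧
  (m ≫ star2 m = (Q ◁ star2 m) ≫ (α_ Q Q Q).inv ≫ (m ▷ Q)) ∧
  (star2 m ≫ m = 𝟙 Q)

/-- `(x, xb)` is a dual pair with evaluation `ε` and coevaluation `η` satisfying the
zig-zag identities, and the duality is unitarily separable: `ε ∘ ε* = id`. -/
def IsUnitarySepDual {e c : B} (x : e ⟶ c) (xb : c ⟶ e)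
    (ε : xb ≫ x ⟶ 𝟙 c) (η : 𝟙 e ⟶ x ≫ xb) : Prop :=
  ((λ_ x).inv ≫ (η ▷ x) ≫ (α_ x xb x).hom ≫ (x ◁ ε) ≫ (ρ_ x).hom = 𝟙 x) ∧
  ((ρ_ xb).inv ≫ (xb ◁ η) ≫ (α_ xb x xb).inv ≫ (ε ▷ xb) ≫ (λ_ xb).hom = 𝟙 xb) ∧
  (star2 ε ≫ ε = 𝟙 (𝟙 c))

/-- The canonical multiplication `id ⊠ ε ⊠ id` on the 1-cell `x ≫ xb` determined
by a dual pair. -/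
def dualMult {e c : B} (x : e ⟶ c) (xb : c ⟶ e) (ε : xb ≫ x ⟶ 𝟙 c) :
    (x ≫ xb) ≫ (x ≫ xb) ⟶ x ≫ xb :=
  (α_ x xb (x ≫ xb)).hom ≫ (x ◁ ((α_ xb x xb).inv ≫ (ε ▷ xb) ≫ (λ_ xb).hom))

/-- The canonical comultiplication `id ⊠ ε* ⊠ id` on the 1-cell `x ≫ xb` determined
by a dual pair. -/
def comultOf {e c : B} (x : e ⟶ c) (xb : c ⟶ e) (ε : xb ≫ x ⟶ 𝟙 c) :
    x ≫ xb ⟶ (x ≫ xb) ≫ (x ≫ xb) :=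
  (x ◁ ((λ_ xb).inv ≫ (star2 ε ▷ xb) ≫ (α_ xb x xb).hom)) ≫ (α_ x xb (x ≫ xb)).inv

/-- `u` is an isomorphism of Q-systems `(Q, m, i) ≅ (Q', m', i')`: a unitary 2-cell
intertwining the multiplications and the units. -/
def IsQSysIso {b : B} {Q Q' : b ⟶ b} (m : Q ≫ Q ⟶ Q) (i : 𝟙 b ⟶ Q)
    (m' : Q' ≫ Q' ⟶ Q') (i' : 𝟙 b ⟶ Q') (u : Q ⟶ Q') : Prop :=
  IsUnitary u ∧ (m ≫ u = ((u ▷ Q) ≫ (Q' ◁ u)) ≫ m') ∧ (i ≫ u = i')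

/-- A Q-system `(Q, m, i)` splits if it is isomorphic, as a Q-system, to `X ⊠ X̄`
for a 1-cell `X` admitting a unitarily separable dual. -/
def QSystemSplits {b : B} (Q : b ⟶ b) (m : Q ≫ Q ⟶ Q) (i : 𝟙 b ⟶ Q) : Prop :=
  ∃ (c : B) (x : b ⟶ c) (xb : c ⟶ b) (ε : xb ≫ x ⟶ 𝟙 c) (η : 𝟙 b ⟶ x ≫ xb),
    IsUnitarySepDual x xb ε η ∧
    ∃ u : Q ⟶ x ≫ xb, IsQSysIso m i (dualMult x xb ε) η u

end QSystems

/-- A C*-2-category is Q-system complete iff every Q-system in it splits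
(by [CPJP, Theorem 3.36] this is equivalent to the canonical inclusion into the
Q-system completion being a *-equivalence). -/
def QSystemComplete (B : Type u₁) [Bicategory.{w₁, v₁} B] [CStarStruct B] : Prop :=
  ∀ (b : B) (Q : b ⟶ b) (m : Q ≫ Q ⟶ Q) (i : 𝟙 b ⟶ Q),
    IsQSystem Q m i → QSystemSplits Q m i

/-! ### The C*-2-category `Fun(C, D)` of *-2-functors -/

/-- The data of a 2-functor between bicategories: action on 0-, 1-, 2-cells,
tensorators and unitors. -/
structure TwoFunctorData (C : Type u₁) (D : Type u₂)
    [Bicategory.{w₁, v₁} C] [Bicategory.{w₂, v₂} D] where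
  obj : C → D
  map : ∀ {a b : C}, (a ⟶ b) → (obj a ⟶ obj b)
  map2 : ∀ {a b : C} {X Y : a ⟶ b}, (X ⟶ Y) → (map X ⟶ map Y)
  tensorator : ∀ {a b c : C} (X : a ⟶ b) (Y : b ⟶ c), map X ≫ map Y ⟶ map (X ≫ Y)
  unitor : ∀ a : C, 𝟙 (obj a) ⟶ map (𝟙 a)

section Fun

variable {C : Type u₁} {D : Type u₂}
variable [Bicategory.{w₁, v₁} C] [Bicategory.Strict C] [CStarStruct C]
variable [Bicategory.{w₂, v₂} D] [Bicategory.Strict D] [CStarStruct D]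

/-- `F` is a *-2-functor: functorial on hom-categories, star-preserving, with unitary
natural tensorators and unitors satisfying the associativity and unitality coherences. -/
def IsStarTwoFunctor (F : TwoFunctorData C D) : Prop :=
  (∀ {a b : C} (X : a ⟶ b), F.map2 (𝟙 X) = 𝟙 (F.map X)) ∧
  (∀ {a b : C} {X Y Z : a ⟶ b} (f : X ⟶ Y) (g : Y ⟶ Z),
      F.map2 (f ≫ g) = F.map2 f ≫ F.map2 g) ∧
  (∀ {a b : C} {X Y : a ⟶ b} (f : X ⟶ Y), F.map2 (star2 f) = star2 (F.map2 f)) ∧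
  (∀ {a b c : C} (X : a ⟶ b) (Y : b ⟶ c), IsUnitary (F.tensorator X Y)) ∧
  (∀ a : C, IsUnitary (F.unitor a)) ∧
  (∀ {a b c : C} {X X' : a ⟶ b} {Y Y' : b ⟶ c} (f : X ⟶ X') (g : Y ⟶ Y'),
      ((F.map2 f ▷ F.map Y) ≫ (F.map X' ◁ F.map2 g)) ≫ F.tensorator X' Y'
        = F.tensorator X Y ≫ F.map2 ((f ▷ Y) ≫ (X' ◁ g))) ∧
  (∀ {a b c d : C} (X : a ⟶ b) (Y : b ⟶ c) (Z : c ⟶ d),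
      (F.tensorator X Y ▷ F.map Z) ≫ F.tensorator (X ≫ Y) Z ≫ F.map2 (α_ X Y Z).hom
        = (α_ (F.map X) (F.map Y) (F.map Z)).hom ≫ (F.map X ◁ F.tensorator Y Z)
            ≫ F.tensorator X (Y ≫ Z)) ∧
  (∀ {a b : C} (X : a ⟶ b),
      (F.unitor a ▷ F.map X) ≫ F.tensorator (𝟙 a) X ≫ F.map2 (λ_ X).hom
        = (λ_ (F.map X)).hom) ∧
  (∀ {a b : C} (X : a ⟶ b),
      (F.map X ◁ F.unitor b) ≫ F.tensorator X (𝟙 b) ≫ F.map2 (ρ_ X).hom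
        = (ρ_ (F.map X)).hom)

/-- The data of a 2-transformation `φ : F ⇒ G`: 1-cells `φ_a : F(a) ⟶ G(a)` and
2-cells `φ_X : F(X) ⊠ φ_b ⟶ φ_a ⊠ G(X)` (written diagrammatically). -/
structure TransfData (F G : TwoFunctorData C D) where
  app : ∀ a : C, F.obj a ⟶ G.obj a
  natur : ∀ {a b : C} (X : a ⟶ b), F.map X ≫ app b ⟶ app a ≫ G.map X

/-- `φ` is a *-2-transformation: each `φ_X` is unitary, natural in `X`, and coherent
with the tensorators and unitors of `F` and `G`. -/
def IsStarTwoTransf {F G : TwoFunctorData C D} (φ : TransfData F G) : Prop :=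
  (∀ {a b : C} (X : a ⟶ b), IsUnitary (φ.natur X)) ∧
  (∀ {a b : C} {X Y : a ⟶ b} (f : X ⟶ Y),
      (F.map2 f ▷ φ.app b) ≫ φ.natur Y = φ.natur X ≫ (φ.app a ◁ G.map2 f)) ∧
  (∀ {a b c : C} (X : a ⟶ b) (Y : b ⟶ c),
      (F.tensorator X Y ▷ φ.app c) ≫ φ.natur (X ≫ Y)
        = (α_ (F.map X) (F.map Y) (φ.app c)).hom ≫ (F.map X ◁ φ.natur Y)
          ≫ (α_ (F.map X) (φ.app b) (G.map Y)).inv ≫ (φ.natur X ▷ G.map Y)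
          ≫ (α_ (φ.app a) (G.map X) (G.map Y)).hom ≫ (φ.app a ◁ G.tensorator X Y)) ∧
  (∀ a : C,
      (F.unitor a ▷ φ.app a) ≫ φ.natur (𝟙 a)
        = (λ_ (φ.app a)).hom ≫ (ρ_ (φ.app a)).inv ≫ (φ.app a ◁ G.unitor a))

/-- The data of a 2-modification: a family of 2-cells `η_a : φ_a ⟶ ψ_a`. -/
abbrev ModifData {F G : TwoFunctorData C D} (φ ψ : TransfData F G) :=
  ∀ a : C, φ.app a ⟶ ψ.app a

/-- `η` is a 2-modification `φ ⇛ ψ`: uniformly bounded components intertwining the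
half-braidings `φ_X`, `ψ_X`. -/
def IsModification {F G : TwoFunctorData C D} (φ ψ : TransfData F G)
    (η : ModifData φ ψ) : Prop :=
  (∃ M : ℝ, ∀ a : C, norm2 (η a) ≤ M) ∧
  (∀ {a b : C} (X : a ⟶ b),
      (F.map X ◁ η b) ≫ ψ.natur X = φ.natur X ≫ (η a ▷ G.map X))

/-- Horizontal composition of 2-transformations (the tensor product `ψ ⊗ φ` of
1-cells of `Fun(C,D)`, written diagrammatically). -/
def hcompT {F G H : TwoFunctorData C D} (φ : TransfData F G) (χ : TransfData G H) :
    TransfData F H where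
  app a := φ.app a ≫ χ.app a
  natur {a b} X :=
    (α_ (F.map X) (φ.app b) (χ.app b)).inv ≫ (φ.natur X ▷ χ.app b)
      ≫ (α_ (φ.app a) (G.map X) (χ.app b)).hom ≫ (φ.app a ◁ χ.natur X)
      ≫ (α_ (φ.app a) (χ.app a) (H.map X)).inv

/-- The identity 2-transformation `1_F`. -/
def idT (F : TwoFunctorData C D) : TransfData F F where
  app a := 𝟙 (F.obj a)
  natur {a b} X := (ρ_ (F.map X)).hom ≫ (λ_ (F.map X)).inv

/-- A Q-system in `End(F) ⊆ Fun(C,D)`: a *-2-transformation `ψ : F ⇒ F` with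
multiplication and unit 2-modifications whose components form Q-systems in `D`. -/
def IsFunQSystem (F : TwoFunctorData C D) (ψ : TransfData F F)
    (m : ModifData (hcompT ψ ψ) ψ) (i : ModifData (idT F) ψ) : Prop :=
  IsStarTwoTransf ψ ∧ IsModification (hcompT ψ ψ) ψ m ∧ IsModification (idT F) ψ i ∧
  ∀ a : C, IsQSystem (ψ.app a) (m a) (i a)

/-- A Q-system `(ψ, m, i)` in `End(F)` splits in `Fun(C,D)`: there are a *-2-functor `G`,
*-2-transformations `φ : F ⇒ G`, `φ̄ : G ⇒ F` forming a unitarily separable dual pair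
(with evaluation and coevaluation 2-modifications), and a unitary 2-modification
`γ : φ̄ ⊗ φ ⇛ ψ` which is an isomorphism of Q-systems. -/
def FunQSystemSplits (F : TwoFunctorData C D) (ψ : TransfData F F)
    (m : ModifData (hcompT ψ ψ) ψ) (i : ModifData (idT F) ψ) : Prop :=
  ∃ (G : TwoFunctorData C D), IsStarTwoFunctor G ∧
  ∃ (φ : TransfData F G) (φb : TransfData G F),
    IsStarTwoTransf φ ∧ IsStarTwoTransf φb ∧
  ∃ (ev : ∀ a : C, φb.app a ≫ φ.app a ⟶ 𝟙 (G.obj a))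
    (coev : ∀ a : C, 𝟙 (F.obj a) ⟶ φ.app a ≫ φb.app a),
    IsModification (hcompT φb φ) (idT G) ev ∧
    IsModification (idT F) (hcompT φ φb) coev ∧
    (∀ a : C, IsUnitarySepDual (φ.app a) (φb.app a) (ev a) (coev a)) ∧
    ∃ (γ : ∀ a : C, φ.app a ≫ φb.app a ⟶ ψ.app a),
      IsModification (hcompT φ φb) ψ γ ∧
      ∀ a : C, IsQSysIso (dualMult (φ.app a) (φb.app a) (ev a)) (coev a)
        (m a) (i a) (γ a)

end Fun

/-- The C*-2-category `Fun(C,D)` is Q-system complete: every Q-system in it splits. -/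
def FunQSystemComplete (C : Type u₁) (D : Type u₂)
    [Bicategory.{w₁, v₁} C] [Bicategory.Strict C] [CStarStruct C]
    [Bicategory.{w₂, v₂} D] [Bicategory.Strict D] [CStarStruct D] : Prop :=
  ∀ (F : TwoFunctorData C D), IsStarTwoFunctor F →
  ∀ (ψ : TransfData F F) (m : ModifData (hcompT ψ ψ) ψ) (i : ModifData (idT F) ψ),
    IsFunQSystem F ψ m i → FunQSystemSplits F ψ m i

/-- The C*-2-category `Fun(C,D)` is locally orthogonal projection complete: every
projection 2-modification splits by an isometric 2-modification. -/
def FunLocProjComplete (C : Type u₁) (D : Type u₂)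
    [Bicategory.{w₁, v₁} C] [Bicategory.Strict C] [CStarStruct C]
    [Bicategory.{w₂, v₂} D] [Bicategory.Strict D] [CStarStruct D] : Prop :=
  ∀ (F G : TwoFunctorData C D), IsStarTwoFunctor F → IsStarTwoFunctor G →
  ∀ (φ : TransfData F G), IsStarTwoTransf φ →
  ∀ (p : ModifData φ φ), IsModification φ φ p → (∀ a : C, IsProjection (p a)) →
  ∃ (χ : TransfData F G), IsStarTwoTransf χ ∧
  ∃ (v : ModifData χ φ), IsModification χ φ v ∧
    (∀ a : C, v a ≫ star2 (v a) = 𝟙 (χ.app a)) ∧ (∀ a : C, star2 (v a) ≫ v a = p a)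

/-! ### The standing setup

`C`, `D` are strict C*-2-categories, `D` is Q-system complete, `F : C → D` is a
*-2-functor and `(ψ, m, i)` is a Q-system in `End_{Fun(C,D)}(F)`; for each 0-cell `a`
of `C` we fix a splitting of the Q-system `ψ_a` in `D`: a 0-cell `c_a`, a 1-cell
`x_a : F(a) ⟶ c_a` with unitarily separable dual `x̄_a`, evaluation `ε_a`,
coevaluation `η_a`, and a unitary `γ⁽ᵃ⁾ : x̄_a ⊠ x_a ⟶ ψ_a` intertwining the
multiplications and units. -/
structure Setup (C : Type u₁) (D : Type u₂)
    [Bicategory.{w₁, v₁} C] [Bicategory.Strict C] [CStarStruct C]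
    [Bicategory.{w₂, v₂} D] [Bicategory.Strict D] [CStarStruct D] where
  locC : LocProjComplete C
  locD : LocProjComplete D
  complD : QSystemComplete D
  F : TwoFunctorData C D
  hF : IsStarTwoFunctor F
  ψ : TransfData F F
  hψ : IsStarTwoTransf ψ
  m : ModifData (hcompT ψ ψ) ψ
  i : ModifData (idT F) ψ
  hm : IsModification (hcompT ψ ψ) ψ m
  hi : IsModification (idT F) ψ i
  hQ : ∀ a : C, IsQSystem (ψ.app a) (m a) (i a)
  cc : C → D
  x : ∀ a : C, F.obj a ⟶ cc a
  xb : ∀ a : C, cc a ⟶ F.obj a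
  ε : ∀ a : C, xb a ≫ x a ⟶ 𝟙 (cc a)
  η : ∀ a : C, 𝟙 (F.obj a) ⟶ x a ≫ xb a
  hdual : ∀ a : C, IsUnitarySepDual (x a) (xb a) (ε a) (η a)
  γ : ∀ a : C, x a ≫ xb a ⟶ ψ.app a
  hγu : ∀ a : C, IsUnitary (γ a)
  hγm : ∀ a : C,
    dualMult (x a) (xb a) (ε a) ≫ γ a
      = ((γ a ▷ (x a ≫ xb a)) ≫ (ψ.app a ◁ γ a)) ≫ m a
  hγi : ∀ a : C, η a ≫ γ a = i a

namespace Setup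

variable {C : Type u₁} {D : Type u₂}
variable [Bicategory.{w₁, v₁} C] [Bicategory.Strict C] [CStarStruct C]
variable [Bicategory.{w₂, v₂} D] [Bicategory.Strict D] [CStarStruct D]

/-- The 2-cell `p_X ∈ End(x_b ⊠ F(X) ⊠ x̄_a)`, namely
`(ε_b ⊠ id) ∘ (id ⊠ γ⁽ᵇ⁾* ⊠ id) ∘ (id ⊠ ψ_X* ⊠ id) ∘ (id ⊠ γ⁽ᵃ⁾ ⊠ id) ∘ (id ⊠ ε_a*)`. -/
def p (S : Setup C D) {a b : C} (X : a ⟶ b) :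
    S.xb a ≫ S.F.map X ≫ S.x b ⟶ S.xb a ≫ S.F.map X ≫ S.x b :=
  (λ_ (S.xb a ≫ S.F.map X ≫ S.x b)).inv
    ≫ (star2 (S.ε a) ▷ (S.xb a ≫ S.F.map X ≫ S.x b))
    ≫ (α_ (S.xb a) (S.x a) (S.xb a ≫ S.F.map X ≫ S.x b)).hom
    ≫ (S.xb a ◁ (α_ (S.x a) (S.xb a) (S.F.map X ≫ S.x b)).inv)
    ≫ (S.xb a ◁ (S.γ a ▷ (S.F.map X ≫ S.x b)))
    ≫ (S.xb a ◁ (α_ (S.ψ.app a) (S.F.map X) (S.x b)).inv)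
    ≫ (S.xb a ◁ (star2 (S.ψ.natur X) ▷ S.x b))
    ≫ (S.xb a ◁ (α_ (S.F.map X) (S.ψ.app b) (S.x b)).hom)
    ≫ (S.xb a ◁ (S.F.map X ◁ (star2 (S.γ b) ▷ S.x b)))
    ≫ (S.xb a ◁ (S.F.map X ◁ (α_ (S.x b) (S.xb b) (S.x b)).hom))
    ≫ (S.xb a ◁ (S.F.map X ◁ (S.x b ◁ S.ε b)))
    ≫ (S.xb a ◁ (S.F.map X ◁ (ρ_ (S.x b)).hom))

/-- The 2-cell `p_{X,Y} ∈ End(x_b ⊠ F(X) ⊠ F(Y) ⊠ x̄_c)` obtained like `p_X` but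
passing `ψ` through both `F(X)` and `F(Y)`. -/
def p2 (S : Setup C D) {a b c : C} (X : a ⟶ b) (Y : b ⟶ c) :
    S.xb a ≫ S.F.map X ≫ S.F.map Y ≫ S.x c
      ⟶ S.xb a ≫ S.F.map X ≫ S.F.map Y ≫ S.x c :=
  (λ_ (S.xb a ≫ S.F.map X ≫ S.F.map Y ≫ S.x c)).inv
    ≫ (star2 (S.ε a) ▷ (S.xb a ≫ S.F.map X ≫ S.F.map Y ≫ S.x c))
    ≫ (α_ (S.xb a) (S.x a) (S.xb a ≫ S.F.map X ≫ S.F.map Y ≫ S.x c)).hom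
    ≫ (S.xb a ◁ (α_ (S.x a) (S.xb a) (S.F.map X ≫ S.F.map Y ≫ S.x c)).inv)
    ≫ (S.xb a ◁ (S.γ a ▷ (S.F.map X ≫ S.F.map Y ≫ S.x c)))
    ≫ (S.xb a ◁ (α_ (S.ψ.app a) (S.F.map X) (S.F.map Y ≫ S.x c)).inv)
    ≫ (S.xb a ◁ (star2 (S.ψ.natur X) ▷ (S.F.map Y ≫ S.x c)))
    ≫ (S.xb a ◁ (α_ (S.F.map X) (S.ψ.app b) (S.F.map Y ≫ S.x c)).hom)
    ≫ (S.xb a ◁ (S.F.map X ◁ (α_ (S.ψ.app b) (S.F.map Y) (S.x c)).inv))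
    ≫ (S.xb a ◁ (S.F.map X ◁ (star2 (S.ψ.natur Y) ▷ S.x c)))
    ≫ (S.xb a ◁ (S.F.map X ◁ (α_ (S.F.map Y) (S.ψ.app c) (S.x c)).hom))
    ≫ (S.xb a ◁ (S.F.map X ◁ (S.F.map Y ◁ (star2 (S.γ c) ▷ S.x c))))
    ≫ (S.xb a ◁ (S.F.map X ◁ (S.F.map Y ◁ (α_ (S.x c) (S.xb c) (S.x c)).hom)))
    ≫ (S.xb a ◁ (S.F.map X ◁ (S.F.map Y ◁ (S.x c ◁ S.ε c))))
    ≫ (S.xb a ◁ (S.F.map X ◁ (S.F.map Y ◁ (ρ_ (S.x c)).hom)))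

end Setup

/-- A choice, for every 1-cell `X` of `C`, of a splitting `u_X : G(X) ⟶ x_b ⊠ F(X) ⊠ x̄_a`
of the projection `p_X` (possible since `D` is locally orthogonal projection complete),
normalized on identity 1-cells as in the paper: `G(1_a) = 1_{c_a}` and
`u_{1_a} = (id ⊠ F¹_a ⊠ id) ∘ ε_a*`. -/
structure GData {C : Type u₁} {D : Type u₂}
    [Bicategory.{w₁, v₁} C] [Bicategory.Strict C] [CStarStruct C]
    [Bicategory.{w₂, v₂} D] [Bicategory.Strict D] [CStarStruct D]
    (S : Setup C D) where
  G1 : ∀ {a b : C}, (a ⟶ b) → (S.cc a ⟶ S.cc b)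
  u : ∀ {a b : C} (X : a ⟶ b), G1 X ⟶ S.xb a ≫ S.F.map X ≫ S.x b
  hu_isometry : ∀ {a b : C} (X : a ⟶ b), u X ≫ star2 (u X) = 𝟙 (G1 X)
  hu_proj : ∀ {a b : C} (X : a ⟶ b), star2 (u X) ≫ u X = S.p X
  hG1_id : ∀ a : C, G1 (𝟙 a) = 𝟙 (S.cc a)
  hu_id : ∀ a : C,
    u (𝟙 a) = eqToHom (hG1_id a) ≫ star2 (S.ε a)
      ≫ (S.xb a ◁ ((λ_ (S.x a)).inv ≫ (S.F.unitor a ▷ S.x a)))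

namespace GData

variable {C : Type u₁} {D : Type u₂}
variable [Bicategory.{w₁, v₁} C] [Bicategory.Strict C] [CStarStruct C]
variable [Bicategory.{w₂, v₂} D] [Bicategory.Strict D] [CStarStruct D]
variable {S : Setup C D}

/-- `G` on 2-cells: `G(f) := u_Y* ∘ (id ⊠ F(f) ⊠ id) ∘ u_X`. -/
def Gmap2 (E : GData S) {a b : C} {X Y : a ⟶ b} (f : X ⟶ Y) : E.G1 X ⟶ E.G1 Y :=
  E.u X ≫ (S.xb a ◁ (S.F.map2 f ▷ S.x b)) ≫ star2 (E.u Y)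

/-- The tensorator of `G`:
`G²_{X,Y} := u_{X⊠Y}* ∘ (id ⊠ F² ⊠ id) ∘ (id ⊠ η* ⊠ id) ∘ (u_X ⊠ u_Y)`. -/
def Gtensor (E : GData S) {a b c : C} (X : a ⟶ b) (Y : b ⟶ c) :
    E.G1 X ≫ E.G1 Y ⟶ E.G1 (X ≫ Y) :=
  (E.u X ▷ E.G1 Y)
    ≫ ((S.xb a ≫ S.F.map X ≫ S.x b) ◁ E.u Y)
    ≫ (α_ (S.xb a) (S.F.map X ≫ S.x b) (S.xb b ≫ S.F.map Y ≫ S.x c)).hom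
    ≫ (S.xb a ◁ (α_ (S.F.map X) (S.x b) (S.xb b ≫ S.F.map Y ≫ S.x c)).hom)
    ≫ (S.xb a ◁ (S.F.map X ◁ (α_ (S.x b) (S.xb b) (S.F.map Y ≫ S.x c)).inv))
    ≫ (S.xb a ◁ (S.F.map X ◁ (star2 (S.η b) ▷ (S.F.map Y ≫ S.x c))))
    ≫ (S.xb a ◁ (S.F.map X ◁ (λ_ (S.F.map Y ≫ S.x c)).hom))
    ≫ (S.xb a ◁ (α_ (S.F.map X) (S.F.map Y) (S.x c)).inv)
    ≫ (S.xb a ◁ (S.F.tensorator X Y ▷ S.x c))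
    ≫ star2 (E.u (X ≫ Y))

/-- The full 2-functor data of `G`. -/
def toFunctor (E : GData S) : TwoFunctorData C D where
  obj a := S.cc a
  map X := E.G1 X
  map2 f := E.Gmap2 f
  tensorator X Y := E.Gtensor X Y
  unitor a := eqToHom (E.hG1_id a).symm

/-- The components of the 2-transformation `φ : F ⇒ G`:
`φ_X := (u_X* ⊠ id_{x_a}) ∘ (id ⊠ η_a)`. -/
def φnat (E : GData S) {a b : C} (X : a ⟶ b) :
    S.F.map X ≫ S.x b ⟶ S.x a ≫ E.G1 X :=
  (λ_ (S.F.map X ≫ S.x b)).inv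
    ≫ (S.η a ▷ (S.F.map X ≫ S.x b))
    ≫ (α_ (S.x a) (S.xb a) (S.F.map X ≫ S.x b)).hom
    ≫ (S.x a ◁ star2 (E.u X))

/-- The components of the 2-transformation `φ̄ : G ⇒ F`:
`φ̄_X := (η_b* ⊠ id) ∘ (id_{x̄_b} ⊠ u_X)`. -/
def φbnat (E : GData S) {a b : C} (X : a ⟶ b) :
    E.G1 X ≫ S.xb b ⟶ S.xb a ≫ S.F.map X :=
  (E.u X ▷ S.xb b)
    ≫ (α_ (S.xb a) (S.F.map X ≫ S.x b) (S.xb b)).hom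
    ≫ (S.xb a ◁ (α_ (S.F.map X) (S.x b) (S.xb b)).hom)
    ≫ (S.xb a ◁ (S.F.map X ◁ star2 (S.η b)))
    ≫ (S.xb a ◁ (ρ_ (S.F.map X)).hom)

/-- The 2-transformation `φ : F ⇒ G`, with `φ_a := x_a`. -/
def φT (E : GData S) : TransfData S.F E.toFunctor where
  app a := S.x a
  natur {a b} X := E.φnat X

/-- The 2-transformation `φ̄ : G ⇒ F`, with `φ̄_a := x̄_a`. -/
def φbT (E : GData S) : TransfData E.toFunctor S.F where
  app a := S.xb a
  natur {a b} X := E.φbnat X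

end GData

local infixr:80 " ⊗≫ " => CategoryTheory.bicategoricalComp

/-! ### Auxiliary lemmas for the proof -/

section StarHelpers

variable {B : Type u₂} [Bicategory.{w₂, v₂} B] [CStarStruct B]

lemma star2_comp' {a b : B} {f g h : a ⟶ b} (η : f ⟶ g) (θ : g ⟶ h) :
    star2 (η ≫ θ) = star2 θ ≫ star2 η := CStarStruct.star_comp η θ

lemma star2_id' {a b : B} (f : a ⟶ b) : star2 (𝟙 f) = 𝟙 f := CStarStruct.star_id f

lemma star2_wl {a b c : B} (f : a ⟶ b) {g h : b ⟶ c} (η : g ⟶ h) :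
    star2 (f ◁ η) = f ◁ star2 η := CStarStruct.star_whiskerLeft f η

lemma star2_wr {a b c : B} {f g : a ⟶ b} (η : f ⟶ g) (h : b ⟶ c) :
    star2 (η ▷ h) = star2 η ▷ h := CStarStruct.star_whiskerRight η h

lemma star2_eqToHom {a b : B} {f g : a ⟶ b} (h : f = g) :
    star2 (eqToHom h) = eqToHom h.symm := by
  subst h; simp only [eqToHom_refl]; exact star2_id' f

variable [Bicategory.Strict B]

lemma star2_assoc_hom {a b c d : B} (f : a ⟶ b) (g : b ⟶ c) (h : c ⟶ d) :
    star2 (α_ f g h).hom = (α_ f g h).inv := by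
  rw [Bicategory.Strict.associator_eqToIso]
  simp only [eqToIso.hom, eqToIso.inv, star2_eqToHom]

lemma star2_assoc_inv {a b c d : B} (f : a ⟶ b) (g : b ⟶ c) (h : c ⟶ d) :
    star2 (α_ f g h).inv = (α_ f g h).hom := by
  rw [Bicategory.Strict.associator_eqToIso]
  simp only [eqToIso.hom, eqToIso.inv, star2_eqToHom]

lemma star2_lu_hom {a b : B} (f : a ⟶ b) : star2 (λ_ f).hom = (λ_ f).inv := by
  rw [Bicategory.Strict.leftUnitor_eqToIso]
  simp only [eqToIso.hom, eqToIso.inv, star2_eqToHom]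

lemma star2_lu_inv {a b : B} (f : a ⟶ b) : star2 (λ_ f).inv = (λ_ f).hom := by
  rw [Bicategory.Strict.leftUnitor_eqToIso]
  simp only [eqToIso.hom, eqToIso.inv, star2_eqToHom]

lemma star2_ru_hom {a b : B} (f : a ⟶ b) : star2 (ρ_ f).hom = (ρ_ f).inv := by
  rw [Bicategory.Strict.rightUnitor_eqToIso]
  simp only [eqToIso.hom, eqToIso.inv, star2_eqToHom]

lemma star2_ru_inv {a b : B} (f : a ⟶ b) : star2 (ρ_ f).inv = (ρ_ f).hom := by
  rw [Bicategory.Strict.rightUnitor_eqToIso]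
  simp only [eqToIso.hom, eqToIso.inv, star2_eqToHom]

end StarHelpers

section KeyLemmas

variable {B : Type u₂} [Bicategory.{w₂, v₂} B] [Bicategory.Strict B] [CStarStruct B]

/-- If `γ` is unitary and intertwines units, then `η* = γ ∘ i*`. -/
lemma gamma_etaStar {e c : B} {x : e ⟶ c} {x' : c ⟶ e} {ψ : e ⟶ e}
    (n : 𝟙 e ⟶ x ≫ x') (g : x ≫ x' ⟶ ψ) (i : 𝟙 e ⟶ ψ)
    (hg : IsUnitary g) (hi : n ≫ g = i) :
    star2 n = g ≫ star2 i := by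
  rw [← hi, star2_comp', ← Category.assoc, hg.1, Category.id_comp]

/-- The coevaluation-comultiplication identity `η ∘ (id ⊠ ε* ⊠ id) ∘ (γ ⊠ γ) = i ∘ m*`. -/
lemma gamma_comult {e c : B} {x : e ⟶ c} {x' : c ⟶ e} {ψ : e ⟶ e}
    (eps : x' ≫ x ⟶ 𝟙 c) (n : 𝟙 e ⟶ x ≫ x') (g : x ≫ x' ⟶ ψ)
    (m : ψ ≫ ψ ⟶ ψ) (i : 𝟙 e ⟶ ψ)
    (hg : IsUnitary g)
    (hm : dualMult x x' eps ≫ g = ((g ▷ (x ≫ x')) ≫ (ψ ◁ g)) ≫ m)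
    (hi : n ≫ g = i) :
    n ⊗≫ x ◁ star2 eps ▷ x' ⊗≫ g ▷ (x ≫ x') ⊗≫ ψ ◁ g = i ≫ star2 m := by
  have key : star2 g ⊗≫ x ◁ star2 eps ▷ x' ⊗≫ g ▷ (x ≫ x') ⊗≫ ψ ◁ g = star2 m := by
    calc star2 g ⊗≫ x ◁ star2 eps ▷ x' ⊗≫ g ▷ (x ≫ x') ⊗≫ ψ ◁ g
        = star2 (dualMult x x' eps ≫ g) ⊗≫ g ▷ (x ≫ x') ⊗≫ ψ ◁ g := by
          simp only [dualMult, star2_comp', star2_wl, star2_wr, star2_assoc_hom,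
            star2_assoc_inv, star2_lu_hom, star2_lu_inv, star2_ru_hom, star2_ru_inv]
          bicategory
      _ = star2 ((((g ▷ (x ≫ x')) ≫ (ψ ◁ g))) ≫ m) ⊗≫ g ▷ (x ≫ x') ⊗≫ ψ ◁ g := by
          rw [hm]
      _ = star2 m ⊗≫ ψ ◁ star2 g ⊗≫ ((star2 g ≫ g) ▷ (x ≫ x')) ⊗≫ ψ ◁ g := by
          simp only [star2_comp', star2_wl, star2_wr]
          bicategory
      _ = star2 m ⊗≫ (ψ ◁ star2 g ≫ ψ ◁ g) ⊗≫ 𝟙 (ψ ≫ ψ) := by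
          rw [hg.2]; bicategory
      _ = star2 m ⊗≫ (ψ ◁ (star2 g ≫ g)) ⊗≫ 𝟙 (ψ ≫ ψ) := by
          rw [← Bicategory.whiskerLeft_comp]
      _ = star2 m := by
          rw [hg.2]; bicategory
  calc n ⊗≫ x ◁ star2 eps ▷ x' ⊗≫ g ▷ (x ≫ x') ⊗≫ ψ ◁ g
      = (n ≫ (g ≫ star2 g)) ⊗≫ x ◁ star2 eps ▷ x' ⊗≫ g ▷ (x ≫ x') ⊗≫ ψ ◁ g := by
        rw [hg.1]; bicategory
    _ = (n ≫ g) ≫ (star2 g ⊗≫ x ◁ star2 eps ▷ x' ⊗≫ g ▷ (x ≫ x') ⊗≫ ψ ◁ g) := by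
        bicategory
    _ = i ≫ star2 m := by rw [hi, key]

/-- The tail identity `(γ* ⊠ id) ∘ (id ⊠ ε ⊠ id) ∘ η* = (id ⊠ γ) ∘ m ∘ i*`. -/
lemma gamma_tail {e c : B} {y : e ⟶ c} {y' : c ⟶ e} {ψ : e ⟶ e}
    (eps : y' ≫ y ⟶ 𝟙 c) (n : 𝟙 e ⟶ y ≫ y') (g : y ≫ y' ⟶ ψ)
    (m : ψ ≫ ψ ⟶ ψ) (i : 𝟙 e ⟶ ψ)
    (hg : IsUnitary g)
    (hm : dualMult y y' eps ≫ g = ((g ▷ (y ≫ y')) ≫ (ψ ◁ g)) ≫ m)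
    (hi : n ≫ g = i) :
    star2 g ▷ (y ≫ y') ⊗≫ y ◁ eps ▷ y' ⊗≫ star2 n = ψ ◁ g ⊗≫ m ≫ star2 i := by
  rw [gamma_etaStar n g i hg hi]
  calc star2 g ▷ (y ≫ y') ⊗≫ y ◁ eps ▷ y' ⊗≫ (g ≫ star2 i)
      = star2 g ▷ (y ≫ y') ⊗≫ (dualMult y y' eps ≫ g) ≫ star2 i := by
        simp only [dualMult]; bicategory
    _ = star2 g ▷ (y ≫ y') ⊗≫ ((((g ▷ (y ≫ y')) ≫ (ψ ◁ g))) ≫ m) ≫ star2 i := by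
        rw [hm]
    _ = ((star2 g ≫ g) ▷ (y ≫ y')) ⊗≫ (ψ ◁ g) ⊗≫ m ≫ star2 i := by
        bicategory
    _ = ψ ◁ g ⊗≫ m ≫ star2 i := by
        rw [hg.2]; bicategory

section MainKey

variable {B : Type u₂} [Bicategory.{w₂, v₂} B] [Bicategory.Strict B] [CStarStruct B]

/-- The main diagrammatic computation for Statement 18, in terms of abstract data. -/
lemma gamma_key {Fa Fb ca cb : B} (f : Fa ⟶ Fb) (x : Fa ⟶ ca) (x' : ca ⟶ Fa)
    (y : Fb ⟶ cb) (y' : cb ⟶ Fb) (ψa : Fa ⟶ Fa) (ψb : Fb ⟶ Fb) (G : ca ⟶ cb)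
    (ea : x' ≫ x ⟶ 𝟙 ca) (na : 𝟙 Fa ⟶ x ≫ x') (eb : y' ≫ y ⟶ 𝟙 cb) (nb : 𝟙 Fb ⟶ y ≫ y')
    (ga : x ≫ x' ⟶ ψa) (gb : y ≫ y' ⟶ ψb) (ψX : f ≫ ψb ⟶ ψa ≫ f) (u : G ⟶ x' ≫ f ≫ y)
    (ma : ψa ≫ ψa ⟶ ψa) (ia : 𝟙 Fa ⟶ ψa) (mb : ψb ≫ ψb ⟶ ψb) (ib' : 𝟙 Fb ⟶ ψb)
    (hga : IsUnitary ga) (hgb : IsUnitary gb) (hψX : IsUnitary ψX)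
    (hma : dualMult x x' ea ≫ ga = ((ga ▷ (x ≫ x')) ≫ (ψa ◁ ga)) ≫ ma)
    (hmb : dualMult y y' eb ≫ gb = ((gb ▷ (y ≫ y')) ≫ (ψb ◁ gb)) ≫ mb)
    (hia : na ≫ ga = ia) (hib : nb ≫ gb = ib')
    (hmX : (f ◁ mb) ≫ ψX
      = ((α_ f ψb ψb).inv ≫ (ψX ▷ ψb) ≫ (α_ ψa f ψb).hom ≫ (ψa ◁ ψX) ≫ (α_ ψa ψa f).inv)
        ≫ (ma ▷ f))
    (hiX : (f ◁ ib') ≫ ψX = ((ρ_ f).hom ≫ (λ_ f).inv) ≫ (ia ▷ f))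
    (hunit : (ia ▷ ψa) ≫ ma = (λ_ ψa).hom)
    (hrunit : (ψa ◁ ia) ≫ ma = (ρ_ ψa).hom)
    (hfrob : ma ≫ star2 ma = (star2 ma ▷ ψa) ≫ (α_ ψa ψa ψa).hom ≫ (ψa ◁ ma))
    (hp : star2 u ≫ u =
      (λ_ (x' ≫ f ≫ y)).inv ≫ (star2 ea ▷ (x' ≫ f ≫ y)) ≫ (α_ x' x (x' ≫ f ≫ y)).hom
        ≫ (x' ◁ (α_ x x' (f ≫ y)).inv) ≫ (x' ◁ (ga ▷ (f ≫ y))) ≫ (x' ◁ (α_ ψa f y).inv)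
        ≫ (x' ◁ (star2 ψX ▷ y)) ≫ (x' ◁ (α_ f ψb y).hom) ≫ (x' ◁ (f ◁ (star2 gb ▷ y)))
        ≫ (x' ◁ (f ◁ (α_ y y' y).hom)) ≫ (x' ◁ (f ◁ (y ◁ eb))) ≫ (x' ◁ (f ◁ (ρ_ y).hom))) :
    (α_ f y y').inv
      ≫ (((λ_ (f ≫ y)).inv ≫ (na ▷ (f ≫ y)) ≫ (α_ x x' (f ≫ y)).hom ≫ (x ◁ star2 u)) ▷ y')
      ≫ (α_ x G y').hom
      ≫ (x ◁ ((u ▷ y') ≫ (α_ x' (f ≫ y) y').hom ≫ (x' ◁ (α_ f y y').hom)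
            ≫ (x' ◁ (f ◁ star2 nb)) ≫ (x' ◁ (ρ_ f).hom)))
      ≫ (α_ x x' f).inv ≫ (ga ▷ f)
    = (f ◁ gb) ≫ ψX := by
  have hψX1 : ψX ≫ star2 ψX = 𝟙 (f ≫ ψb) := hψX.1
  have hψX2 : star2 ψX ≫ ψX = 𝟙 (ψa ≫ f) := hψX.2
  have hmX2 : f ◁ mb
      = (α_ f ψb ψb).inv ≫ (ψX ▷ ψb) ≫ (α_ ψa f ψb).hom ≫ (ψa ◁ ψX) ≫ (α_ ψa ψa f).inv
        ≫ (ma ▷ f) ≫ star2 ψX := by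
    have h := congrArg (fun t => t ≫ star2 ψX) hmX
    simpa only [Category.assoc, hψX1, Category.comp_id] using h
  have hiX2 : star2 ψX ≫ (f ◁ star2 ib') = (star2 ia ▷ f) ≫ (λ_ f).hom ≫ (ρ_ f).inv := by
    have h := congrArg star2 hiX
    simpa only [star2_comp', star2_wl, star2_wr, star2_lu_inv, star2_ru_hom,
      Category.assoc] using h
  have hQ8 : star2 ma ≫ (ψa ◁ star2 ia) = (ρ_ ψa).inv := by
    have h := congrArg star2 hrunit
    simpa only [star2_comp', star2_wl, star2_ru_hom] using h
  calc (α_ f y y').inv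
      ≫ (((λ_ (f ≫ y)).inv ≫ (na ▷ (f ≫ y)) ≫ (α_ x x' (f ≫ y)).hom ≫ (x ◁ star2 u)) ▷ y')
      ≫ (α_ x G y').hom
      ≫ (x ◁ ((u ▷ y') ≫ (α_ x' (f ≫ y) y').hom ≫ (x' ◁ (α_ f y y').hom)
            ≫ (x' ◁ (f ◁ star2 nb)) ≫ (x' ◁ (ρ_ f).hom)))
      ≫ (α_ x x' f).inv ≫ (ga ▷ f)
      = 𝟙 (f ≫ y ≫ y') ⊗≫ na ▷ (f ≫ y ≫ y') ⊗≫ x ◁ (star2 u ≫ u) ▷ y'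
          ⊗≫ x ◁ x' ◁ f ◁ star2 nb ⊗≫ ga ▷ f := by
        bicategory
    _ = 𝟙 (f ≫ y ≫ y') ⊗≫ na ▷ (f ≫ y ≫ y') ⊗≫ x ◁ star2 ea ▷ (x' ≫ f ≫ y ≫ y')
          ⊗≫ x ◁ x' ◁ ga ▷ (f ≫ y ≫ y') ⊗≫ x ◁ x' ◁ star2 ψX ▷ (y ≫ y')
          ⊗≫ x ◁ x' ◁ f ◁ (star2 gb ▷ (y ≫ y') ⊗≫ y ◁ eb ▷ y' ⊗≫ star2 nb)
          ⊗≫ ga ▷ f := by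
        rw [hp]; bicategory
    _ = 𝟙 (f ≫ y ≫ y') ⊗≫ na ▷ (f ≫ y ≫ y') ⊗≫ x ◁ star2 ea ▷ (x' ≫ f ≫ y ≫ y')
          ⊗≫ x ◁ x' ◁ ga ▷ (f ≫ y ≫ y') ⊗≫ x ◁ x' ◁ star2 ψX ▷ (y ≫ y')
          ⊗≫ x ◁ x' ◁ f ◁ (ψb ◁ gb ⊗≫ mb ≫ star2 ib')
          ⊗≫ ga ▷ f := by
        rw [gamma_tail eb nb gb mb ib' hgb hmb hib]
    _ = 𝟙 (f ≫ y ≫ y') ⊗≫ na ▷ (f ≫ y ≫ y') ⊗≫ x ◁ star2 ea ▷ (x' ≫ f ≫ y ≫ y')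
          ⊗≫ x ◁ x' ◁ ga ▷ (f ≫ y ≫ y')
          ⊗≫ x ◁ x' ◁ (star2 ψX ▷ (y ≫ y') ≫ (f ≫ ψb) ◁ gb)
          ⊗≫ x ◁ x' ◁ f ◁ (mb ≫ star2 ib') ⊗≫ ga ▷ f := by
        bicategory
    _ = 𝟙 (f ≫ y ≫ y') ⊗≫ na ▷ (f ≫ y ≫ y') ⊗≫ x ◁ star2 ea ▷ (x' ≫ f ≫ y ≫ y')
          ⊗≫ x ◁ x' ◁ ga ▷ (f ≫ y ≫ y')
          ⊗≫ x ◁ x' ◁ ((ψa ≫ f) ◁ gb ≫ star2 ψX ▷ ψb)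
          ⊗≫ x ◁ x' ◁ f ◁ (mb ≫ star2 ib') ⊗≫ ga ▷ f := by
        rw [← Bicategory.whisker_exchange (star2 ψX) gb]
    _ = 𝟙 (f ≫ y ≫ y') ⊗≫ na ▷ (f ≫ y ≫ y') ⊗≫ x ◁ star2 ea ▷ (x' ≫ f ≫ y ≫ y')
          ⊗≫ x ◁ x' ◁ (ga ▷ (f ≫ y ≫ y') ≫ ψa ◁ (f ◁ gb))
          ⊗≫ x ◁ x' ◁ star2 ψX ▷ ψb
          ⊗≫ x ◁ x' ◁ f ◁ (mb ≫ star2 ib') ⊗≫ ga ▷ f := by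
        bicategory
    _ = 𝟙 (f ≫ y ≫ y') ⊗≫ na ▷ (f ≫ y ≫ y') ⊗≫ x ◁ star2 ea ▷ (x' ≫ f ≫ y ≫ y')
          ⊗≫ x ◁ x' ◁ ((x ≫ x') ◁ (f ◁ gb) ≫ ga ▷ (f ≫ ψb))
          ⊗≫ x ◁ x' ◁ star2 ψX ▷ ψb
          ⊗≫ x ◁ x' ◁ f ◁ (mb ≫ star2 ib') ⊗≫ ga ▷ f := by
        rw [← Bicategory.whisker_exchange ga (f ◁ gb)]
    _ = 𝟙 (f ≫ y ≫ y') ⊗≫ na ▷ (f ≫ y ≫ y')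
          ⊗≫ x ◁ (star2 ea ▷ (x' ≫ f ≫ y ≫ y') ≫ (x' ≫ x) ◁ (x' ◁ (f ◁ gb)))
          ⊗≫ x ◁ x' ◁ ga ▷ (f ≫ ψb)
          ⊗≫ x ◁ x' ◁ star2 ψX ▷ ψb
          ⊗≫ x ◁ x' ◁ f ◁ (mb ≫ star2 ib') ⊗≫ ga ▷ f := by
        bicategory
    _ = 𝟙 (f ≫ y ≫ y') ⊗≫ na ▷ (f ≫ y ≫ y')
          ⊗≫ x ◁ (𝟙 ca ◁ (x' ◁ (f ◁ gb)) ≫ star2 ea ▷ (x' ≫ f ≫ ψb))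
          ⊗≫ x ◁ x' ◁ ga ▷ (f ≫ ψb)
          ⊗≫ x ◁ x' ◁ star2 ψX ▷ ψb
          ⊗≫ x ◁ x' ◁ f ◁ (mb ≫ star2 ib') ⊗≫ ga ▷ f := by
        rw [← Bicategory.whisker_exchange (star2 ea) (x' ◁ (f ◁ gb))]
    _ = 𝟙 (f ≫ y ≫ y')
          ⊗≫ (na ▷ (f ≫ y ≫ y') ≫ (x ≫ x') ◁ (f ◁ gb))
          ⊗≫ x ◁ star2 ea ▷ (x' ≫ f ≫ ψb)
          ⊗≫ x ◁ x' ◁ ga ▷ (f ≫ ψb)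
          ⊗≫ x ◁ x' ◁ star2 ψX ▷ ψb
          ⊗≫ x ◁ x' ◁ f ◁ (mb ≫ star2 ib') ⊗≫ ga ▷ f := by
        bicategory
    _ = 𝟙 (f ≫ y ≫ y')
          ⊗≫ (𝟙 Fa ◁ (f ◁ gb) ≫ na ▷ (f ≫ ψb))
          ⊗≫ x ◁ star2 ea ▷ (x' ≫ f ≫ ψb)
          ⊗≫ x ◁ x' ◁ ga ▷ (f ≫ ψb)
          ⊗≫ x ◁ x' ◁ star2 ψX ▷ ψb
          ⊗≫ x ◁ x' ◁ f ◁ (mb ≫ star2 ib') ⊗≫ ga ▷ f := by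
        rw [← Bicategory.whisker_exchange na (f ◁ gb)]
    _ = 𝟙 (f ≫ y ≫ y') ⊗≫ f ◁ gb ⊗≫ na ▷ (f ≫ ψb)
          ⊗≫ x ◁ star2 ea ▷ (x' ≫ f ≫ ψb)
          ⊗≫ ((x ≫ x') ◁ (ga ▷ (f ≫ ψb) ⊗≫ star2 ψX ▷ ψb ⊗≫ f ◁ (mb ≫ star2 ib') ⊗≫ 𝟙 f)
              ≫ ga ▷ f) := by
        bicategory
    _ = 𝟙 (f ≫ y ≫ y') ⊗≫ f ◁ gb ⊗≫ na ▷ (f ≫ ψb)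
          ⊗≫ x ◁ star2 ea ▷ (x' ≫ f ≫ ψb)
          ⊗≫ (ga ▷ ((x ≫ x') ≫ f ≫ ψb)
              ≫ ψa ◁ (ga ▷ (f ≫ ψb) ⊗≫ star2 ψX ▷ ψb ⊗≫ f ◁ (mb ≫ star2 ib') ⊗≫ 𝟙 f)) := by
        rw [← Bicategory.whisker_exchange ga
          (ga ▷ (f ≫ ψb) ⊗≫ star2 ψX ▷ ψb ⊗≫ f ◁ (mb ≫ star2 ib') ⊗≫ 𝟙 f)]
    _ = 𝟙 (f ≫ y ≫ y') ⊗≫ f ◁ gb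
          ⊗≫ ((na ⊗≫ x ◁ star2 ea ▷ x' ⊗≫ ga ▷ (x ≫ x') ⊗≫ ψa ◁ ga) ▷ (f ≫ ψb))
          ⊗≫ ψa ◁ (star2 ψX ▷ ψb) ⊗≫ ψa ◁ (f ◁ mb) ⊗≫ ψa ◁ (f ◁ star2 ib')
          ⊗≫ 𝟙 (ψa ≫ f) := by
        bicategory
    _ = 𝟙 (f ≫ y ≫ y') ⊗≫ f ◁ gb
          ⊗≫ ((ia ≫ star2 ma) ▷ (f ≫ ψb))
          ⊗≫ ψa ◁ (star2 ψX ▷ ψb) ⊗≫ ψa ◁ (f ◁ mb) ⊗≫ ψa ◁ (f ◁ star2 ib')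
          ⊗≫ 𝟙 (ψa ≫ f) := by
        rw [gamma_comult ea na ga ma ia hga hma hia]
    _ = 𝟙 (f ≫ y ≫ y') ⊗≫ f ◁ gb ⊗≫ ia ▷ (f ≫ ψb) ⊗≫ star2 ma ▷ (f ≫ ψb)
          ⊗≫ ψa ◁ ((star2 ψX ≫ ψX) ▷ ψb) ⊗≫ ψa ◁ (ψa ◁ ψX) ⊗≫ ψa ◁ (ma ▷ f)
          ⊗≫ ψa ◁ (star2 ψX ≫ f ◁ star2 ib') ⊗≫ 𝟙 (ψa ≫ f) := by
        rw [hmX2]; bicategory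
    _ = 𝟙 (f ≫ y ≫ y') ⊗≫ f ◁ gb ⊗≫ ia ▷ (f ≫ ψb)
          ⊗≫ (star2 ma ▷ (f ≫ ψb) ≫ (ψa ≫ ψa) ◁ ψX)
          ⊗≫ ψa ◁ (ma ▷ f)
          ⊗≫ ψa ◁ (star2 ψX ≫ f ◁ star2 ib') ⊗≫ 𝟙 (ψa ≫ f) := by
        rw [hψX2]; bicategory
    _ = 𝟙 (f ≫ y ≫ y') ⊗≫ f ◁ gb ⊗≫ ia ▷ (f ≫ ψb)
          ⊗≫ (ψa ◁ ψX ≫ star2 ma ▷ (ψa ≫ f))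
          ⊗≫ ψa ◁ (ma ▷ f)
          ⊗≫ ψa ◁ (star2 ψX ≫ f ◁ star2 ib') ⊗≫ 𝟙 (ψa ≫ f) := by
        rw [← Bicategory.whisker_exchange (star2 ma) ψX]
    _ = 𝟙 (f ≫ y ≫ y') ⊗≫ f ◁ gb
          ⊗≫ (ia ▷ (f ≫ ψb) ≫ ψa ◁ ψX)
          ⊗≫ star2 ma ▷ (ψa ≫ f) ⊗≫ ψa ◁ (ma ▷ f) ⊗≫ ψa ◁ (star2 ia ▷ f)
          ⊗≫ 𝟙 (ψa ≫ f) := by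
        rw [hiX2]; bicategory
    _ = 𝟙 (f ≫ y ≫ y') ⊗≫ f ◁ gb
          ⊗≫ (𝟙 Fa ◁ ψX ≫ ia ▷ (ψa ≫ f))
          ⊗≫ star2 ma ▷ (ψa ≫ f) ⊗≫ ψa ◁ (ma ▷ f) ⊗≫ ψa ◁ (star2 ia ▷ f)
          ⊗≫ 𝟙 (ψa ≫ f) := by
        rw [← Bicategory.whisker_exchange ia ψX]
    _ = 𝟙 (f ≫ y ≫ y') ⊗≫ f ◁ gb ⊗≫ ψX ⊗≫ ia ▷ (ψa ≫ f)
          ⊗≫ (((star2 ma ▷ ψa) ≫ (α_ ψa ψa ψa).hom ≫ (ψa ◁ ma)) ▷ f)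
          ⊗≫ ψa ◁ (star2 ia ▷ f) ⊗≫ 𝟙 (ψa ≫ f) := by
        bicategory
    _ = 𝟙 (f ≫ y ≫ y') ⊗≫ f ◁ gb ⊗≫ ψX ⊗≫ ia ▷ (ψa ≫ f)
          ⊗≫ ((ma ≫ star2 ma) ▷ f)
          ⊗≫ ψa ◁ (star2 ia ▷ f) ⊗≫ 𝟙 (ψa ≫ f) := by
        rw [← hfrob]
    _ = 𝟙 (f ≫ y ≫ y') ⊗≫ f ◁ gb ⊗≫ ψX
          ⊗≫ ((((ia ▷ ψa) ≫ ma) ≫ star2 ma) ▷ f)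
          ⊗≫ ψa ◁ (star2 ia ▷ f) ⊗≫ 𝟙 (ψa ≫ f) := by
        bicategory
    _ = 𝟙 (f ≫ y ≫ y') ⊗≫ f ◁ gb ⊗≫ ψX
          ⊗≫ (((λ_ ψa).hom ≫ star2 ma) ▷ f)
          ⊗≫ ψa ◁ (star2 ia ▷ f) ⊗≫ 𝟙 (ψa ≫ f) := by
        rw [hunit]
    _ = 𝟙 (f ≫ y ≫ y') ⊗≫ f ◁ gb ⊗≫ ψX
          ⊗≫ ((star2 ma ≫ (ψa ◁ star2 ia)) ▷ f) ⊗≫ 𝟙 (ψa ≫ f) := by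
        bicategory
    _ = 𝟙 (f ≫ y ≫ y') ⊗≫ f ◁ gb ⊗≫ ψX ⊗≫ ((ρ_ ψa).inv ▷ f) ⊗≫ 𝟙 (ψa ≫ f) := by
        rw [hQ8]
    _ = (f ◁ gb) ≫ ψX := by
        bicategory

end MainKey

/-- In the standing setup with `G`, `u_X`, `φ` and `φ̄` as defined,
the family `γ = (γ⁽ᵃ⁾)` is a unitary 2-modification `φ̄ ⊗ φ ⇛ ψ`, i.e. its norms
are uniformly bounded and for every 1-cell `X ∈ C₁(a,b)`,
`(id_{F(X)} ⊠ γ_a) ∘ (φ̄_X ⊠ id_{x_a}) ∘ (id_{x̄_b} ⊠ φ_X) = ψ_X ∘ (γ_b ⊠ id_{F(X)})`;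
since `γ` also intertwines the multiplications and units, `(ψ, m, i)` and `φ̄ ⊗ φ`
(with multiplication `id_φ̄ ⊗ ε ⊗ id_φ` and unit `η`) are isomorphic as Q-systems
in `End_{Fun(C,D)}(F)`. -/
theorem gamma_qsystem_isomorphism
    {C : Type u₁} {D : Type u₂}
    [Bicategory.{w₁, v₁} C] [Bicategory.Strict C] [CStarStruct C]
    [Bicategory.{w₂, v₂} D] [Bicategory.Strict D] [CStarStruct D]
    (S : Setup C D) (E : GData S) :
    (∃ M : ℝ, ∀ a : C, norm2 (S.γ a) ≤ M) ∧
    (∀ {a b : C} (X : a ⟶ b),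
        (α_ (S.F.map X) (S.x b) (S.xb b)).inv
            ≫ (E.φnat X ▷ S.xb b)
            ≫ (α_ (S.x a) (E.G1 X) (S.xb b)).hom
            ≫ (S.x a ◁ E.φbnat X)
            ≫ (α_ (S.x a) (S.xb a) (S.F.map X)).inv
            ≫ (S.γ a ▷ S.F.map X)
          = (S.F.map X ◁ S.γ b) ≫ S.ψ.natur X) ∧
    IsModification (hcompT E.φT E.φbT) S.ψ S.γ ∧
    (∀ a : C, IsQSysIso (dualMult (S.x a) (S.xb a) (S.ε a)) (S.η a)
        (S.m a) (S.i a) (S.γ a)) := by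
  have hb : ∀ a : C, norm2 (S.γ a) ≤ 1 := by
    intro a
    have h1 : norm2 (S.γ a) * norm2 (S.γ a) = norm2 (𝟙 (S.x a ≫ S.xb a)) := by
      rw [← CStarStruct.nrm_cstar (S.γ a), (S.hγu a).1]
    have h2 : norm2 (𝟙 (S.x a ≫ S.xb a)) * norm2 (𝟙 (S.x a ≫ S.xb a))
        = norm2 (𝟙 (S.x a ≫ S.xb a)) := by
      conv_lhs => rw [← CStarStruct.nrm_cstar (𝟙 (S.x a ≫ S.xb a))]
      rw [CStarStruct.star_id, Category.comp_id]
    nlinarith [CStarStruct.nrm_nonneg (S.γ a),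
      CStarStruct.nrm_nonneg (𝟙 (S.x a ≫ S.xb a)),
      sq_nonneg (norm2 (S.γ a) - 1),
      sq_nonneg (norm2 (𝟙 (S.x a ≫ S.xb a)) - 1)]
  have key : ∀ {a b : C} (X : a ⟶ b),
      (α_ (S.F.map X) (S.x b) (S.xb b)).inv
          ≫ (E.φnat X ▷ S.xb b)
          ≫ (α_ (S.x a) (E.G1 X) (S.xb b)).hom
          ≫ (S.x a ◁ E.φbnat X)
          ≫ (α_ (S.x a) (S.xb a) (S.F.map X)).inv
          ≫ (S.γ a ▷ S.F.map X)
        = (S.F.map X ◁ S.γ b) ≫ S.ψ.natur X := by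
    intro a b X
    exact gamma_key (S.F.map X) (S.x a) (S.xb a) (S.x b) (S.xb b) (S.ψ.app a) (S.ψ.app b)
      (E.G1 X) (S.ε a) (S.η a) (S.ε b) (S.η b) (S.γ a) (S.γ b) (S.ψ.natur X) (E.u X)
      (S.m a) (S.i a) (S.m b) (S.i b) (S.hγu a) (S.hγu b) (S.hψ.1 X) (S.hγm a) (S.hγm b)
      (S.hγi a) (S.hγi b) (S.hm.2 X) (S.hi.2 X) ((S.hQ a).2.1) ((S.hQ a).2.2.1)
      ((S.hQ a).2.2.2.1) (E.hu_proj X)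
  refine ⟨⟨1, hb⟩, fun {a b} X => key X, ⟨⟨1, hb⟩, ?_⟩,
    fun a => ⟨S.hγu a, S.hγm a, S.hγi a⟩⟩
  intro a b X
  have h := key X
  refine h.symm.trans ?_
  dsimp only [hcompT, GData.φT, GData.φbT, GData.toFunctor]
  simp only [Category.assoc]
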